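/- Let h₁, h₂ : ℝ² → ℝ be continuous functions satisfying conditions (h1) and (h2). Then for every (x, x') ∈ ℝ², the infimum inf_{y∈ℝ} (h₁(x, y) + h₂(y, x')) is attained at some y ∈ ℝ; moreover the conjunction h₁*h₂(x, x') = min_{y∈ℝ} (h₁(x, y) + h₂(y, x')) is a continuous function of (x, x') and satisfies condition (h1), i.e. h₁*h₂(x+1, x'+1) = h₁*h₂(x, x') for all x, x'. -/

import Mathlib

open Filter Topology MeasureTheory

/-- The finite segment of `x` between indices `j` and `k` is `h`-minimal. -/
def IsMinSegment (h : ℝ → ℝ → ℝ) (j k : ℤ) (x : ℤ → ℝ) : Prop :=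
  ∀ y : ℤ → ℝ, y j = x j → y k = x k →
    ∑ i ∈ Finset.Ico j k, h (x i) (x (i + 1)) ≤ ∑ i ∈ Finset.Ico j k, h (y i) (y (i + 1))

/-- A bi-infinite configuration is `h`-minimal if every finite segment of it is minimal. -/
def MinimalConfig (h : ℝ → ℝ → ℝ) (x : ℤ → ℝ) : Prop :=
  ∀ j k : ℤ, j < k → IsMinSegment h j k x

/-- The segment `(a, b, c)` is `h`-minimal (endpoints `a`, `c` fixed, middle point varies). -/
def MinTriple (h : ℝ → ℝ → ℝ) (a b c : ℝ) : Prop :=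
  ∀ m : ℝ, h a b + h b c ≤ h a m + h m c

/-- Condition (h1): periodicity. -/
def CondH1 (h : ℝ → ℝ → ℝ) : Prop := ∀ x x' : ℝ, h (x + 1) (x' + 1) = h x x'

/-- Condition (h2): `h (x, x+ξ) → +∞` as `|ξ| → ∞`, uniformly in `x`. -/
def CondH2 (h : ℝ → ℝ → ℝ) : Prop :=
  ∀ M : ℝ, ∃ R : ℝ, ∀ x ξ : ℝ, R ≤ |ξ| → M ≤ h x (x + ξ)

/-- Condition (h3). -/
def CondH3 (h : ℝ → ℝ → ℝ) : Prop :=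
  ∀ x ξ x' ξ' : ℝ, x < ξ → x' < ξ' → h x x' + h ξ ξ' < h x ξ' + h ξ x'

/-- Condition (h4). -/
def CondH4 (h : ℝ → ℝ → ℝ) : Prop :=
  ∀ xb x x' ξb ξ' : ℝ, MinTriple h xb x x' → MinTriple h ξb x ξ' →
    (xb ≠ ξb ∨ x' ≠ ξ') → (xb - ξb) * (x' - ξ') < 0

/-- Condition (h5). -/
def CondH5 (h : ℝ → ℝ → ℝ) : Prop :=
  ∃ ρ : ℝ → ℝ → ℝ, Continuous (Function.uncurry ρ) ∧ (∀ s s' : ℝ, 0 < ρ s s') ∧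
    ∀ x ξ x' ξ' : ℝ, x < ξ → x' < ξ' →
      (∫ s in x..ξ, ∫ s' in x'..ξ', ρ s s') ≤ h x ξ' + h ξ x' - h x x' - h ξ ξ'

/-- Condition (h6θ). -/
def CondH6 (θ : ℝ) (h : ℝ → ℝ → ℝ) : Prop :=
  (∀ x' : ℝ, ConvexOn ℝ Set.univ fun x => θ * (x - x') ^ 2 / 2 - h x x') ∧
  (∀ x : ℝ, ConvexOn ℝ Set.univ fun x' => θ * (x' - x) ^ 2 / 2 - h x x')

/-- The infimum in the conjunction is attained; the conjunction is continuous
and satisfies (h1). -/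
lemma periodic_int' {h : ℝ → ℝ → ℝ} (h1 : CondH1 h) :
    ∀ (n : ℤ) (x y : ℝ), h (x + n) (y + n) = h x y := by
  intro n
  induction n using Int.induction_on with
  | zero => simp
  | succ k ih =>
    intro x y
    have key := h1 (x + ((k : ℤ) : ℝ)) (y + ((k : ℤ) : ℝ))
    have e1 : x + ((k : ℤ) : ℝ) + 1 = x + (((k : ℤ) + 1 : ℤ) : ℝ) := by push_cast; ring
    have e2 : y + ((k : ℤ) : ℝ) + 1 = y + (((k : ℤ) + 1 : ℤ) : ℝ) := by push_cast; ring
    rw [e1, e2, ih x y] at key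
    exact key
  | pred k ih =>
    intro x y
    have key := h1 (x + ((-(k : ℤ) - 1 : ℤ) : ℝ)) (y + ((-(k : ℤ) - 1 : ℤ) : ℝ))
    have e1 : x + ((-(k : ℤ) - 1 : ℤ) : ℝ) + 1 = x + ((-(k : ℤ) : ℤ) : ℝ) := by push_cast; ring
    have e2 : y + ((-(k : ℤ) - 1 : ℤ) : ℝ) + 1 = y + ((-(k : ℤ) : ℤ) : ℝ) := by push_cast; ring
    rw [e1, e2, ih x y] at key
    exact key.symm

lemma exists_lower_bound' {h : ℝ → ℝ → ℝ} (hc : Continuous (Function.uncurry h))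
    (h1 : CondH1 h) (h2 : CondH2 h) : ∃ B : ℝ, ∀ x y : ℝ, B ≤ h x y := by
  obtain ⟨R, hR⟩ := h2 0
  set R' := max R 0 with hR'def
  have hR0 : 0 ≤ R' := le_max_right _ _
  have hSc : IsCompact (Set.Icc (0:ℝ) 1 ×ˢ Set.Icc (-R') (1+R')) :=
    isCompact_Icc.prod isCompact_Icc
  have hSne : (Set.Icc (0:ℝ) 1 ×ˢ Set.Icc (-R') (1+R')).Nonempty :=
    Set.Nonempty.prod ⟨0, by norm_num⟩ ⟨0, by constructor <;> linarith⟩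
  obtain ⟨m, hmS, hm⟩ := hSc.exists_isMinOn hSne hc.continuousOn
  refine ⟨min (Function.uncurry h m) 0, fun x y => ?_⟩
  set x₀ := Int.fract x with hx₀
  set y₀ := y - ⌊x⌋ with hy₀
  have hx0le : 0 ≤ x₀ := Int.fract_nonneg x
  have hx0lt : x₀ < 1 := Int.fract_lt_one x
  have hxy : h x y = h x₀ y₀ := by
    have key := periodic_int' h1 ⌊x⌋ x₀ y₀
    have e1 : x₀ + ((⌊x⌋ : ℤ) : ℝ) = x := by rw [hx₀]; exact Int.fract_add_floor x
    have e2 : y₀ + ((⌊x⌋ : ℤ) : ℝ) = y := by rw [hy₀]; ring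
    rw [e1, e2] at key
    exact key
  rw [hxy]
  rcases le_or_gt R' |y₀ - x₀| with hcase | hcase
  · have := hR x₀ (y₀ - x₀) (le_trans (le_max_left _ _) hcase)
    rw [show x₀ + (y₀ - x₀) = y₀ by ring] at this
    exact le_trans (min_le_right _ _) this
  · have habs := abs_lt.mp hcase
    have hmem : (x₀, y₀) ∈ Set.Icc (0:ℝ) 1 ×ˢ Set.Icc (-R') (1+R') := by
      constructor
      · exact ⟨hx0le, hx0lt.le⟩
      · constructor <;> simp only [] <;> [linarith [habs.1]; linarith [habs.2]]
    exact le_trans (min_le_left _ _) (hm hmem)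

theorem conjunction_attained_continuous_periodic
    (h₁ h₂ : ℝ → ℝ → ℝ)
    (hc₁ : Continuous (Function.uncurry h₁)) (hc₂ : Continuous (Function.uncurry h₂))
    (h₁1 : CondH1 h₁) (h₁2 : CondH2 h₁) (h₂1 : CondH1 h₂) (h₂2 : CondH2 h₂) :
    (∀ x x' : ℝ, ∃ y : ℝ, ∀ z : ℝ, h₁ x y + h₂ y x' ≤ h₁ x z + h₂ z x') ∧
    Continuous (Function.uncurry fun x x' : ℝ => ⨅ y : ℝ, (h₁ x y + h₂ y x')) ∧
    CondH1 (fun x x' : ℝ => ⨅ y : ℝ, (h₁ x y + h₂ y x')) := by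
  obtain ⟨B₁, hB₁⟩ := exists_lower_bound' hc₁ h₁1 h₁2
  obtain ⟨B₂, hB₂⟩ := exists_lower_bound' hc₂ h₂1 h₂2
  -- continuity of the fiber function
  have contf : ∀ x x' : ℝ, Continuous fun y : ℝ => h₁ x y + h₂ y x' := fun x x' =>
    (hc₁.comp (continuous_const.prodMk continuous_id)).add
      (hc₂.comp (continuous_id.prodMk continuous_const))
  have bdd : ∀ x x' : ℝ, BddBelow (Set.range fun y : ℝ => h₁ x y + h₂ y x') := by
    intro x x'
    exact ⟨B₁ + B₂, by rintro v ⟨y, rfl⟩; exact add_le_add (hB₁ x y) (hB₂ y x')⟩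
  -- uniform attainment lemma
  have attain : ∀ (x x' C R' : ℝ), 0 ≤ R' → h₁ x x + h₂ x x' ≤ C →
      (∀ ξ : ℝ, R' ≤ |ξ| → C + 1 - B₂ ≤ h₁ x (x + ξ)) →
      ∃ y ∈ Set.Icc (x - R') (x + R'),
        ∀ z : ℝ, h₁ x y + h₂ y x' ≤ h₁ x z + h₂ z x' := by
    intro x x' C R' hR0 hC hcoer
    have hxmem : x ∈ Set.Icc (x - R') (x + R') := by constructor <;> linarith
    obtain ⟨y, hyI, hy⟩ := isCompact_Icc.exists_isMinOn ⟨x, hxmem⟩ (contf x x').continuousOn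
    refine ⟨y, hyI, fun z => ?_⟩
    by_cases hz : z ∈ Set.Icc (x - R') (x + R')
    · exact hy hz
    · have hzfar : R' ≤ |z - x| := by
        rw [Set.mem_Icc, not_and_or] at hz
        rcases hz with hz | hz <;> push_neg at hz <;> rw [abs_sub_comm]
        · rw [abs_of_pos (by linarith)]; linarith
        · rw [abs_of_neg (by linarith)]; linarith
      have h1z : C + 1 - B₂ ≤ h₁ x z := by
        have := hcoer (z - x) hzfar
        rwa [show x + (z - x) = z by ring] at this
      have hyx : h₁ x y + h₂ y x' ≤ h₁ x x + h₂ x x' := hy hxmem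
      have := hB₂ z x'
      linarith
  -- Part 1
  have part1 : ∀ x x' : ℝ, ∃ y : ℝ, ∀ z : ℝ, h₁ x y + h₂ y x' ≤ h₁ x z + h₂ z x' := by
    intro x x'
    obtain ⟨R, hR⟩ := h₁2 (h₁ x x + h₂ x x' + 1 - B₂)
    obtain ⟨y, _, hy⟩ := attain x x' (h₁ x x + h₂ x x') (max R 0) (le_max_right _ _) le_rfl
      (fun ξ hξ => hR x ξ (le_trans (le_max_left _ _) hξ))
    exact ⟨y, hy⟩
  refine ⟨part1, ?_, ?_⟩
  · -- continuity
    show Continuous fun p : ℝ × ℝ => ⨅ y : ℝ, (h₁ p.1 y + h₂ y p.2)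
    rw [continuous_iff_continuousAt]
    rintro ⟨a, b⟩
    -- bound on the diagonal over the closed ball
    have hU : IsCompact (Metric.closedBall ((a, b) : ℝ × ℝ) 1) := isCompact_closedBall _ _
    have contdiag : Continuous fun p : ℝ × ℝ => h₁ p.1 p.1 + h₂ p.1 p.2 :=
      (hc₁.comp (continuous_fst.prodMk continuous_fst)).add
        (hc₂.comp (continuous_fst.prodMk continuous_snd))
    obtain ⟨mp, _, hmp⟩ := hU.exists_isMaxOn ⟨(a, b), Metric.mem_closedBall_self zero_le_one⟩
      contdiag.continuousOn
    set C := h₁ mp.1 mp.1 + h₂ mp.1 mp.2 with hCdef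
    obtain ⟨R, hR⟩ := h₁2 (C + 1 - B₂)
    set R' := max R 1 with hR'def
    have hR'1 : (1:ℝ) ≤ R' := le_max_right _ _
    set K := Set.Icc (a - 1 - R') (a + 1 + R') with hKdef
    have hKc : IsCompact K := isCompact_Icc
    -- for each p in the ball, a global minimizer in K
    have sel : ∀ p : ℝ × ℝ, p ∈ Metric.closedBall ((a, b) : ℝ × ℝ) 1 →
        ∃ y ∈ K, (⨅ z : ℝ, (h₁ p.1 z + h₂ z p.2)) = h₁ p.1 y + h₂ y p.2 ∧
          ∀ z : ℝ, h₁ p.1 y + h₂ y p.2 ≤ h₁ p.1 z + h₂ z p.2 := by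
      rintro ⟨x, x'⟩ hp
      have hx1 : |x - a| ≤ 1 := by
        have h1 : dist x a ≤ dist ((x, x') : ℝ × ℝ) (a, b) := by
          rw [Prod.dist_eq]; exact le_max_left _ _
        have := Metric.mem_closedBall.mp hp
        rw [Real.dist_eq] at h1
        linarith
      have hxC : h₁ x x + h₂ x x' ≤ C := hmp hp
      obtain ⟨y, hyI, hy⟩ := attain x x' C R' (by linarith) hxC
        (fun ξ hξ => hR x ξ (le_trans (le_max_left _ _) hξ))
      have habs := abs_le.mp hx1
      refine ⟨y, ⟨by linarith [hyI.1], by linarith [hyI.2]⟩, ?_, hy⟩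
      exact le_antisymm (ciInf_le (bdd x x') y) (le_ciInf hy)
    -- uniform continuity on compact product
    have contφ : Continuous fun q : (ℝ × ℝ) × ℝ => h₁ q.1.1 q.2 + h₂ q.2 q.1.2 :=
      (hc₁.comp ((continuous_fst.fst).prodMk continuous_snd)).add
        (hc₂.comp (continuous_snd.prodMk continuous_fst.snd))
    have hUC := (hU.prod hKc).uniformContinuousOn_of_continuous contφ.continuousOn
    rw [Metric.uniformContinuousOn_iff] at hUC
    rw [Metric.continuousAt_iff]
    intro ε hε
    obtain ⟨δ, hδ0, hδ⟩ := hUC ε hε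
    refine ⟨min δ 1, lt_min hδ0 one_pos, fun {p} hp => ?_⟩
    have hpU : p ∈ Metric.closedBall ((a, b) : ℝ × ℝ) 1 :=
      Metric.mem_closedBall.mpr (le_of_lt (lt_of_lt_of_le hp (min_le_right _ _)))
    have habU : ((a, b) : ℝ × ℝ) ∈ Metric.closedBall ((a, b) : ℝ × ℝ) 1 :=
      Metric.mem_closedBall_self zero_le_one
    obtain ⟨y₁, hy₁K, hy₁eq, hy₁min⟩ := sel p hpU
    obtain ⟨y₀, hy₀K, hy₀eq, hy₀min⟩ := sel (a, b) habU
    have hdist : ∀ y : ℝ, y ∈ K → dist ((p, y) : (ℝ × ℝ) × ℝ) (((a, b), y) : (ℝ × ℝ) × ℝ) < δ := by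
      intro y hy
      rw [Prod.dist_eq]
      simp only [dist_self]
      rw [max_eq_left dist_nonneg]
      exact lt_of_lt_of_le hp (min_le_left _ _)
    have key₀ := hδ (p, y₀) (Set.mk_mem_prod hpU hy₀K) ((a, b), y₀)
      (Set.mk_mem_prod habU hy₀K) (hdist y₀ hy₀K)
    have key₁ := hδ (p, y₁) (Set.mk_mem_prod hpU hy₁K) ((a, b), y₁)
      (Set.mk_mem_prod habU hy₁K) (hdist y₁ hy₁K)
    rw [Real.dist_eq, abs_lt] at key₀ key₁ ⊢
    have e₀ : (⨅ z : ℝ, (h₁ p.1 z + h₂ z p.2)) ≤ h₁ p.1 y₀ + h₂ y₀ p.2 := ciInf_le (bdd _ _) y₀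
    have e₁ : (⨅ z : ℝ, (h₁ a z + h₂ z b)) ≤ h₁ a y₁ + h₂ y₁ b := ciInf_le (bdd _ _) y₁
    simp only [] at key₀ key₁
    constructor
    · nlinarith [hy₀eq, hy₁eq, key₀.1, key₁.2, e₀, e₁]
    · nlinarith [hy₀eq, hy₁eq, key₀.2, key₁.1, e₀, e₁]
  · -- periodicity
    intro x x'
    have hrange : (Set.range fun y : ℝ => h₁ (x + 1) y + h₂ y (x' + 1)) =
        Set.range fun y : ℝ => h₁ x y + h₂ y x' := by
      ext v
      constructor
      · rintro ⟨y, rfl⟩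
        refine ⟨y - 1, ?_⟩
        have h1 := h₁1 x (y - 1)
        have h2 := h₂1 (y - 1) x'
        rw [show y - 1 + 1 = y by ring] at h1 h2
        show h₁ x (y - 1) + h₂ (y - 1) x' = h₁ (x + 1) y + h₂ y (x' + 1)
        rw [← h1, ← h2]
      · rintro ⟨y, rfl⟩
        refine ⟨y + 1, ?_⟩
        show h₁ (x + 1) (y + 1) + h₂ (y + 1) (x' + 1) = h₁ x y + h₂ y x'
        rw [h₁1 x y, h₂1 y x']
    show (⨅ y : ℝ, (h₁ (x+1) y + h₂ y (x'+1))) = ⨅ y : ℝ, (h₁ x y + h₂ y x')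
    rw [iInf, iInf, hrange]
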